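/- First tropical duality (Theorem 1.2, identity (1.7)): assume the global sign-coherence hypothesis. Then for every n×n skew-symmetrizable integer matrix B and every finite sequence w of indices in {1,…,n}, the matrix C^{-Bᵀ}(w) is invertible and (G^B(w))ᵀ = (C^{-Bᵀ}(w))⁻¹, i.e. (G^B(w))ᵀ · C^{-Bᵀ}(w) = I. -/

import Mathlib

open Matrix

/-- Entrywise positive part `[B]₊`. -/
def matPos {n : ℕ} (B : Matrix (Fin n) (Fin n) ℤ) : Matrix (Fin n) (Fin n) ℤ :=
  fun i j => max (B i j) 0

/-- `B^{k•}` : the matrix `B` with all entries outside row `k` set to zero. -/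
def rowR {n : ℕ} (B : Matrix (Fin n) (Fin n) ℤ) (k : Fin n) : Matrix (Fin n) (Fin n) ℤ :=
  fun i j => if i = k then B i j else 0

/-- `B^{•k}` : the matrix `B` with all entries outside column `k` set to zero. -/
def colR {n : ℕ} (B : Matrix (Fin n) (Fin n) ℤ) (k : Fin n) : Matrix (Fin n) (Fin n) ℤ :=
  fun i j => if j = k then B i j else 0

/-- `J_k` : the identity matrix with its `(k,k)` entry replaced by `-1`. -/
def Jmat (n : ℕ) (k : Fin n) : Matrix (Fin n) (Fin n) ℤ :=
  Matrix.diagonal (fun i => if i = k then -1 else 1)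

/-- Matrix mutation `μ_k(B)`. -/
def mutB {n : ℕ} (B : Matrix (Fin n) (Fin n) ℤ) (k : Fin n) : Matrix (Fin n) (Fin n) ℤ :=
  fun i j =>
    if i = k ∨ j = k then -B i j
    else B i j + max (B i k) 0 * max (B k j) 0 - max (-B i k) 0 * max (-B k j) 0

/-- Mutation of the `C`-matrix in direction `l`, where `B` is the current exchange matrix. -/
def mutC {n : ℕ} (B C : Matrix (Fin n) (Fin n) ℤ) (l : Fin n) : Matrix (Fin n) (Fin n) ℤ :=
  fun i j =>
    if j = l then -C i j
    else C i j + max (C i l) 0 * max (B l j) 0 - max (-C i l) 0 * max (-B l j) 0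

/-- One step of the simultaneous `(B, C, G)` recursion with initial exchange matrix `B0`. -/
def BCGstep {n : ℕ} (B0 : Matrix (Fin n) (Fin n) ℤ)
    (p : Matrix (Fin n) (Fin n) ℤ × Matrix (Fin n) (Fin n) ℤ × Matrix (Fin n) (Fin n) ℤ)
    (l : Fin n) :
    Matrix (Fin n) (Fin n) ℤ × Matrix (Fin n) (Fin n) ℤ × Matrix (Fin n) (Fin n) ℤ :=
  (mutB p.1 l, mutC p.1 p.2.1 l,
    p.2.2 * (Jmat n l + colR (matPos p.1) l) - B0 * colR (matPos p.2.1) l)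

/-- The triple `(B_m, C_m, G_m)` obtained from `(B0, I, I)` by mutating along the word `w`. -/
def BCG {n : ℕ} (B0 : Matrix (Fin n) (Fin n) ℤ) (w : List (Fin n)) :
    Matrix (Fin n) (Fin n) ℤ × Matrix (Fin n) (Fin n) ℤ × Matrix (Fin n) (Fin n) ℤ :=
  w.foldl (BCGstep B0) (B0, 1, 1)

/-- `B^B(w)` : the exchange matrix at the end of the word `w`. -/
def Bmat {n : ℕ} (B0 : Matrix (Fin n) (Fin n) ℤ) (w : List (Fin n)) : Matrix (Fin n) (Fin n) ℤ :=
  (BCG B0 w).1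

/-- `C^B(w)` : the matrix of c-vectors at the end of the word `w`. -/
def Cmat {n : ℕ} (B0 : Matrix (Fin n) (Fin n) ℤ) (w : List (Fin n)) : Matrix (Fin n) (Fin n) ℤ :=
  (BCG B0 w).2.1

/-- `G^B(w)` : the matrix of g-vectors at the end of the word `w`. -/
def Gmat {n : ℕ} (B0 : Matrix (Fin n) (Fin n) ℤ) (w : List (Fin n)) : Matrix (Fin n) (Fin n) ℤ :=
  (BCG B0 w).2.2

/-- `B` is skew-symmetrized by the diagonal matrix with (positive) diagonal entries `d`,
i.e. `Bᵀ = -D B D⁻¹`, stated integrally as `Bᵀ D = -(D B)`. -/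
def SkewSymmBy {n : ℕ} (B : Matrix (Fin n) (Fin n) ℤ) (d : Fin n → ℤ) : Prop :=
  (∀ i, 0 < d i) ∧ Bᵀ * Matrix.diagonal d = -(Matrix.diagonal d * B)

/-- `B` is skew-symmetrizable. -/
def SkewSymmetrizable {n : ℕ} (B : Matrix (Fin n) (Fin n) ℤ) : Prop :=
  ∃ d : Fin n → ℤ, SkewSymmBy B d

/-- Every column of `C` has all entries nonnegative or all entries nonpositive. -/
def SignCoherent {n : ℕ} (C : Matrix (Fin n) (Fin n) ℤ) : Prop :=
  ∀ j, (∀ i, 0 ≤ C i j) ∨ (∀ i, C i j ≤ 0)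

/-- The global sign-coherence hypothesis in rank `n`: all C-matrices of all cluster patterns
of rank `n` are sign-coherent. -/
def GlobalSC (n : ℕ) : Prop :=
  ∀ B' : Matrix (Fin n) (Fin n) ℤ, SkewSymmetrizable B' →
    ∀ w' : List (Fin n), SignCoherent (Cmat B' w')

/-- The sign `ε_j(C)` of the `j`-th column of a sign-coherent matrix `C`:
`-1` if column `j` contains a negative entry, `1` otherwise. -/
def epsCol {n : ℕ} (C : Matrix (Fin n) (Fin n) ℤ) (j : Fin n) : ℤ :=
  if ∃ i, C i j < 0 then -1 else 1


section Aux

open Finset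

variable {n : ℕ}

/-! ### Scalar lemmas -/

lemma pmax_neg (x : ℤ) : max (-x) 0 = max x 0 - x := by
  rcases le_total x 0 with h | h
  · rw [max_eq_left (neg_nonneg.2 h), max_eq_right h]; ring
  · rw [max_eq_right (neg_nonpos.2 h), max_eq_left h]; ring

lemma pmax_mul_nonneg (x d : ℤ) (hd : 0 ≤ d) : max (x * d) 0 = max x 0 * d := by
  rw [max_mul_of_nonneg _ _ hd, zero_mul]

/-- Key scalar identity behind the `E·B·F` factorization of matrix mutation. -/
lemma eps_scalar (ε a c : ℤ) (hε : ε = 1 ∨ ε = -1) :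
    max (-(ε * a)) 0 * c + a * max (ε * c) 0
      = max a 0 * max c 0 - max (-a) 0 * max (-c) 0 := by
  have h1 := pmax_neg a
  have h2 := pmax_neg c
  rcases hε with rfl | rfl
  · simp only [one_mul]
    rw [h1, h2]; ring
  · simp only [neg_mul, one_mul, neg_neg]
    rw [h1, h2]; ring

/-- Key scalar identity behind the `C·F` form of the c-matrix mutation. -/
lemma eps_scalar_C (ε c b : ℤ) (hε : ε = 1 ∨ ε = -1) (hc : 0 ≤ ε * c) :
    c * max (ε * b) 0 = max c 0 * max b 0 - max (-c) 0 * max (-b) 0 := by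
  have h1 := pmax_neg c
  have h2 := pmax_neg b
  rcases hε with rfl | rfl
  · have hc' : 0 ≤ c := by omega
    simp only [one_mul]
    rw [h1, h2, max_eq_left hc']; ring
  · have hc' : c ≤ 0 := by omega
    simp only [neg_mul, one_mul]
    rw [h1, h2, max_eq_right hc']; ring

/-! ### The elementary matrices `E` and `F` -/

/-- Identity matrix except in column `l`, whose entries are `[s·B i l]₊` off the
diagonal and `-1` at `(l,l)`. -/
def Emat (B : Matrix (Fin n) (Fin n) ℤ) (s : ℤ) (l : Fin n) : Matrix (Fin n) (Fin n) ℤ :=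
  fun i j => if j = l then (if i = l then -1 else max (s * B i l) 0)
             else (if i = j then 1 else 0)

/-- Identity matrix except in row `l`, whose entries are `[s·B l j]₊` off the
diagonal and `-1` at `(l,l)`. -/
def Fmat (B : Matrix (Fin n) (Fin n) ℤ) (s : ℤ) (l : Fin n) : Matrix (Fin n) (Fin n) ℤ :=
  fun i j => if i = l then (if j = l then -1 else max (s * B l j) 0)
             else (if i = j then 1 else 0)

lemma Fmat_negT (B : Matrix (Fin n) (Fin n) ℤ) (s : ℤ) (l : Fin n) :
    Fmat (-Bᵀ) s l = (Emat B (-s) l)ᵀ := by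
  ext i j
  simp only [Matrix.transpose_apply, Emat, Fmat, Matrix.neg_apply]
  by_cases hi : i = l
  · by_cases hj : j = l
    · simp [hi, hj]
    · simp [hi, hj, mul_neg, neg_mul]
  · by_cases hj : j = l
    · simp [hi, hj, Ne.symm hi]
    · simp [hi, hj, eq_comm]

/-- Left multiplication by `Emat`. -/
lemma Emat_mul (B Y : Matrix (Fin n) (Fin n) ℤ) (s : ℤ) (l : Fin n) (i j : Fin n) :
    (Emat B s l * Y) i j
      = if i = l then -Y l j else Y i j + max (s * B i l) 0 * Y l j := by
  rw [Matrix.mul_apply]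
  by_cases hi : i = l
  · have key : ∀ q, Emat B s l i q * Y q j = if q = l then -Y l j else 0 := by
      intro q
      by_cases hq : q = l
      · simp [Emat, hq, hi]
      · simp [Emat, hq, hi, Ne.symm hq]
    rw [Finset.sum_congr rfl fun q _ => key q, Finset.sum_ite_eq' Finset.univ l]
    simp [hi]
  · have key : ∀ q, Emat B s l i q * Y q j
        = (if q = l then max (s * B i l) 0 * Y l j else 0)
          + (if q = i then Y i j else 0) := by
      intro q
      by_cases hq : q = l
      · simp [Emat, hq, hi, Ne.symm hi]
      · by_cases hqi : q = i
        · simp [Emat, hq, hqi, hi]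
        · simp [Emat, hq, hqi, Ne.symm hqi]
    rw [Finset.sum_congr rfl fun q _ => key q, Finset.sum_add_distrib,
      Finset.sum_ite_eq' Finset.univ l, Finset.sum_ite_eq' Finset.univ i]
    simp [hi, add_comm]

/-- Right multiplication by `Fmat`. -/
lemma mul_Fmat (X B : Matrix (Fin n) (Fin n) ℤ) (s : ℤ) (l : Fin n) (i j : Fin n) :
    (X * Fmat B s l) i j
      = if j = l then -X i l else X i j + X i l * max (s * B l j) 0 := by
  rw [Matrix.mul_apply]
  by_cases hj : j = l
  · have key : ∀ q, X i q * Fmat B s l q j = if q = l then -X i l else 0 := by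
      intro q
      by_cases hq : q = l
      · simp [Fmat, hq, hj]
      · simp [Fmat, hq, hj]
    rw [Finset.sum_congr rfl fun q _ => key q, Finset.sum_ite_eq' Finset.univ l]
    simp [hj]
  · have key : ∀ q, X i q * Fmat B s l q j
        = (if q = l then X i l * max (s * B l j) 0 else 0)
          + (if q = j then X i j else 0) := by
      intro q
      by_cases hq : q = l
      · simp [Fmat, hq, hj, Ne.symm hj]
      · by_cases hqj : q = j
        · simp [Fmat, hq, hqj, hj]
        · simp [Fmat, hq, hqj]
    rw [Finset.sum_congr rfl fun q _ => key q, Finset.sum_add_distrib,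
      Finset.sum_ite_eq' Finset.univ l, Finset.sum_ite_eq' Finset.univ j]
    simp [hj, add_comm]

/-- `Emat` is an involution. -/
lemma Emat_invol (B : Matrix (Fin n) (Fin n) ℤ) (s : ℤ) (l : Fin n) :
    Emat B s l * Emat B s l = 1 := by
  ext i j
  rw [Emat_mul]
  by_cases hi : i = l
  · by_cases hj : j = l
    · simp [Emat, hi, hj, Matrix.one_apply]
    · simp [Emat, hi, hj, Ne.symm hj, Matrix.one_apply]
  · by_cases hj : j = l
    · simp only [Emat, hi, hj, if_neg hi, ite_true, ite_false, if_pos rfl,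
        Matrix.one_apply, if_neg (hj ▸ hi)]
      ring
    · simp [Emat, hi, hj, Ne.symm hj, Matrix.one_apply]

lemma Emat_isUnit (B : Matrix (Fin n) (Fin n) ℤ) (s : ℤ) (l : Fin n) :
    IsUnit (Emat B s l) :=
  (Matrix.isUnit_iff_isUnit_det _).2 (Matrix.isUnit_det_of_right_inverse (Emat_invol B s l))

/-! ### Factorizations of the mutation recursions -/

/-- `μ_l(B) = E · B · F`. -/
lemma mutB_factor (B : Matrix (Fin n) (Fin n) ℤ) (l : Fin n) (ε : ℤ)
    (hε : ε = 1 ∨ ε = -1) (hll : B l l = 0) :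
    mutB B l = Emat B (-ε) l * (B * Fmat B ε l) := by
  ext i j
  rw [Emat_mul]
  by_cases hi : i = l
  · rw [mul_Fmat]
    by_cases hj : j = l
    · simp [mutB, hi, hj, hll]
    · simp [mutB, hi, hj, hll]
  · rw [mul_Fmat, mul_Fmat]
    by_cases hj : j = l
    · simp [mutB, hi, hj, hll]
    · have hkey := eps_scalar ε (B i l) (B l j) hε
      simp only [mutB, hi, hj, if_neg hi, if_neg hj, or_self, ite_false, if_false,
        hll, zero_mul, add_zero, neg_mul]
      linarith [hkey]

/-- `μ_l(-Bᵀ) = -(μ_l B)ᵀ`. -/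
lemma mutB_negT (B : Matrix (Fin n) (Fin n) ℤ) (l : Fin n) :
    mutB (-Bᵀ) l = -(mutB B l)ᵀ := by
  ext i j
  simp only [mutB, Matrix.neg_apply, Matrix.transpose_apply, neg_neg]
  by_cases h : i = l ∨ j = l
  · rw [if_pos h, if_pos (show j = l ∨ i = l by tauto)]
    ring
  · rw [if_neg h, if_neg (show ¬(j = l ∨ i = l) by tauto)]
    ring

/-- The c-matrix mutation is right multiplication by `F`, assuming sign coherence of
column `l`. -/
lemma mutC_eq (B C : Matrix (Fin n) (Fin n) ℤ) (l : Fin n) (ε : ℤ)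
    (hε : ε = 1 ∨ ε = -1) (hsc : ∀ i, 0 ≤ ε * C i l) :
    mutC B C l = C * Fmat B ε l := by
  ext i j
  rw [mul_Fmat]
  by_cases hj : j = l
  · simp [mutC, hj]
  · simp only [mutC, if_neg hj]
    have := eps_scalar_C ε (C i l) (B l j) hε (hsc i)
    linarith [this]

/-! ### Auxiliary identities for `colR` and `Jmat` -/

lemma mul_colR (X Y : Matrix (Fin n) (Fin n) ℤ) (l : Fin n) :
    X * colR Y l = colR (X * Y) l := by
  ext i j
  rw [Matrix.mul_apply, colR]
  by_cases hj : j = l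
  · rw [if_pos hj, Matrix.mul_apply]
    apply Finset.sum_congr rfl
    intro q _
    rw [colR, if_pos hj, hj]
  · rw [if_neg hj]
    apply Finset.sum_eq_zero
    intro q _
    rw [colR, if_neg hj, mul_zero]

lemma Jmat_add_colR (B : Matrix (Fin n) (Fin n) ℤ) (l : Fin n) (hll : B l l = 0) :
    Jmat n l + colR (matPos B) l = Emat B 1 l := by
  ext i j
  simp only [Matrix.add_apply, Jmat, Matrix.diagonal_apply, colR, matPos, Emat, one_mul]
  by_cases hj : j = l
  · by_cases hi : i = l
    · simp [hi, hj, hll]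
    · simp [hi, hj]
  · by_cases hij : i = j
    · simp [hij, hj]
    · simp [hij, hj]

lemma Emat_one_sub_colR (B : Matrix (Fin n) (Fin n) ℤ) (l : Fin n) (hll : B l l = 0) :
    Emat B 1 l - colR B l = Emat B (-1) l := by
  ext i j
  simp only [Matrix.sub_apply, Emat, colR, one_mul, neg_one_mul]
  by_cases hj : j = l
  · by_cases hi : i = l
    · simp [hi, hj, hll]
    · simp [hi, hj, pmax_neg]
  · simp [hj]

/-! ### Skew-symmetrizability -/

lemma skew_entry {B : Matrix (Fin n) (Fin n) ℤ} {d : Fin n → ℤ}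
    (h : SkewSymmBy B d) (i j : Fin n) : B j i * d j = -(d i * B i j) := by
  have := congrFun (congrFun h.2 i) j
  simpa [Matrix.mul_apply, Matrix.diagonal_apply, Finset.sum_ite_eq,
    Matrix.transpose_apply] using this

lemma skew_diag {B : Matrix (Fin n) (Fin n) ℤ} {d : Fin n → ℤ}
    (h : SkewSymmBy B d) (l : Fin n) : B l l = 0 := by
  have h1 := skew_entry h l l
  have h2 := (h.1 l)
  nlinarith [h1, h2]

lemma skewSymmBy_of_entry {B : Matrix (Fin n) (Fin n) ℤ} {d : Fin n → ℤ}
    (hd : ∀ i, 0 < d i) (h : ∀ i j, B j i * d j = -(d i * B i j)) : SkewSymmBy B d := by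
  refine ⟨hd, ?_⟩
  ext i j
  simp [Matrix.mul_apply, Matrix.diagonal_apply, Finset.sum_ite_eq, h i j,
    Matrix.transpose_apply]

/-- Matrix mutation preserves the skew-symmetrizer. -/
lemma skew_mutB {B : Matrix (Fin n) (Fin n) ℤ} {d : Fin n → ℤ}
    (h : SkewSymmBy B d) (l : Fin n) : SkewSymmBy (mutB B l) d := by
  refine skewSymmBy_of_entry h.1 fun i j => ?_
  by_cases hc : i = l ∨ j = l
  · have hji : mutB B l j i = -B j i := by
      simp only [mutB, if_pos (show j = l ∨ i = l by tauto)]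
    have hij : mutB B l i j = -B i j := by
      simp only [mutB, if_pos hc]
    rw [hji, hij]
    have hs := skew_entry h i j
    linear_combination -hs
  · push_neg at hc
    have hji : mutB B l j i = B j i + max (B j l) 0 * max (B l i) 0
        - max (-B j l) 0 * max (-B l i) 0 := by
      simp only [mutB, if_neg (show ¬(j = l ∨ i = l) by tauto)]
    have hij : mutB B l i j = B i j + max (B i l) 0 * max (B l j) 0
        - max (-B i l) 0 * max (-B l j) 0 := by
      simp only [mutB, if_neg (show ¬(i = l ∨ j = l) by tauto)]
    rw [hji, hij]
    have hb : B j i * d j = -(d i * B i j) := skew_entry h i j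
    have hu : B j l * d j = -(d l * B l j) := skew_entry h l j
    have hv : B l i * d l = -(d i * B i l) := skew_entry h i l
    have hdl : (0:ℤ) < d l := h.1 l
    have hdj : (0:ℤ) < d j := h.1 j
    have hdi : (0:ℤ) < d i := h.1 i
    have e1 : max (B j l) 0 * d j = d l * max (-(B l j)) 0 := by
      rw [← pmax_mul_nonneg _ _ hdj.le, hu, show -(d l * B l j) = -B l j * d l by ring,
        pmax_mul_nonneg _ _ hdl.le]; ring
    have e2 : max (B l i) 0 * d l = d i * max (-(B i l)) 0 := by
      rw [← pmax_mul_nonneg _ _ hdl.le, hv, show -(d i * B i l) = -B i l * d i by ring,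
        pmax_mul_nonneg _ _ hdi.le]; ring
    have e3 : max (-(B j l)) 0 * d j = d l * max (B l j) 0 := by
      rw [← pmax_mul_nonneg _ _ hdj.le, show -B j l * d j = -(B j l * d j) by ring, hu,
        neg_neg, show d l * B l j = B l j * d l by ring, pmax_mul_nonneg _ _ hdl.le]; ring
    have e4 : max (-(B l i)) 0 * d l = d i * max (B i l) 0 := by
      rw [← pmax_mul_nonneg _ _ hdl.le, show -B l i * d l = -(B l i * d l) by ring, hv,
        neg_neg, show d i * B i l = B i l * d i by ring, pmax_mul_nonneg _ _ hdi.le]; ring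
    have c1 : max (B j l) 0 * max (B l i) 0 * d j * d l
        = d l * d i * (max (-(B i l)) 0 * max (-(B l j)) 0) := by
      calc max (B j l) 0 * max (B l i) 0 * d j * d l
          = (max (B j l) 0 * d j) * (max (B l i) 0 * d l) := by ring
        _ = (d l * max (-(B l j)) 0) * (d i * max (-(B i l)) 0) := by rw [e1, e2]
        _ = d l * d i * (max (-(B i l)) 0 * max (-(B l j)) 0) := by ring
    have c2 : max (-B j l) 0 * max (-B l i) 0 * d j * d l
        = d l * d i * (max (B i l) 0 * max (B l j) 0) := by
      calc max (-B j l) 0 * max (-B l i) 0 * d j * d l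
          = (max (-(B j l)) 0 * d j) * (max (-(B l i)) 0 * d l) := by ring
        _ = (d l * max (B l j) 0) * (d i * max (B i l) 0) := by rw [e3, e4]
        _ = d l * d i * (max (B i l) 0 * max (B l j) 0) := by ring
    have hb' : B j i * d j * d l = -(d i * B i j) * d l := by rw [hb]
    have key : (B j i + max (B j l) 0 * max (B l i) 0 - max (-B j l) 0 * max (-B l i) 0)
          * d j * d l
        = -(d i * (B i j + max (B i l) 0 * max (B l j) 0
            - max (-B i l) 0 * max (-B l j) 0)) * d l := by
      linear_combination hb' + c1 - c2
    exact mul_right_cancel₀ (ne_of_gt hdl) key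

/-- `FᵀD = DE` for a `d`-skew-symmetrizable matrix. -/
lemma Fmat_T_diag {B : Matrix (Fin n) (Fin n) ℤ} {d : Fin n → ℤ}
    (h : SkewSymmBy B d) (ε : ℤ) (l : Fin n) :
    (Fmat B ε l)ᵀ * Matrix.diagonal d = Matrix.diagonal d * Emat B (-ε) l := by
  ext i j
  rw [Matrix.mul_diagonal, Matrix.diagonal_mul, Matrix.transpose_apply]
  by_cases hj : j = l
  · by_cases hi : i = l
    · simp only [Fmat, Emat, hi, hj]
      simp
    · simp only [Fmat, Emat, hj, if_pos rfl, if_neg hi, ite_true, ite_false]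
      have hs : B l i * d l = -(d i * B i l) := skew_entry h i l
      have hdl : (0:ℤ) < d l := h.1 l
      have hdi : (0:ℤ) < d i := h.1 i
      have h2 : ε * B l i * d l = -ε * B i l * d i := by
        rw [mul_assoc, hs]; ring
      calc max (ε * B l i) 0 * d l = max (ε * B l i * d l) 0 :=
            (pmax_mul_nonneg _ _ hdl.le).symm
        _ = max (-ε * B i l * d i) 0 := by rw [h2]
        _ = max (-ε * B i l) 0 * d i := pmax_mul_nonneg _ _ hdi.le
        _ = d i * max (-ε * B i l) 0 := mul_comm _ _
  · by_cases hij : i = j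
    · simp [Fmat, Emat, hj, hij]
    · simp [Fmat, Emat, hj, hij, Ne.symm hij]

/-- `-Bᵀ` is skew-symmetrizable whenever `B` is. -/
lemma skewSymmetrizable_negT {B : Matrix (Fin n) (Fin n) ℤ}
    (h : SkewSymmetrizable B) : SkewSymmetrizable (-Bᵀ) := by
  obtain ⟨d, hd, hB⟩ := h
  have hent : ∀ i j, B j i * d j = -(d i * B i j) := skew_entry ⟨hd, hB⟩
  have hdpos : ∀ i, (0:ℤ) < (∏ k, d k) / d i := fun i =>
    Int.ediv_pos_of_pos_of_dvd (Finset.prod_pos fun k _ => hd k) (hd i).le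
      (Finset.dvd_prod_of_mem d (Finset.mem_univ i))
  refine ⟨fun i => (∏ k, d k) / d i, skewSymmBy_of_entry hdpos ?_⟩
  intro i j
  simp only [Matrix.neg_apply, Matrix.transpose_apply]
  have hdvd : ∀ i : Fin n, d i * ((∏ k, d k) / d i) = ∏ k, d k := fun i =>
    Int.mul_ediv_cancel' (Finset.dvd_prod_of_mem d (Finset.mem_univ i))
  have key : (-B i j) * ((∏ k, d k) / d j) * d j = -((∏ k, d k) / d i * (-B j i)) * d j := by
    have h1 : ((∏ k, d k) / d j) * d j = ∏ k, d k := by rw [mul_comm]; exact hdvd j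
    have h2 : d i * ((∏ k, d k) / d i) = ∏ k, d k := hdvd i
    have h3 := hent i j
    calc (-B i j) * ((∏ k, d k) / d j) * d j = (-B i j) * (∏ k, d k) := by
          rw [mul_assoc, h1]
      _ = (-B i j) * (d i * ((∏ k, d k) / d i)) := by rw [h2]
      _ = ((∏ k, d k) / d i) * (-(d i * B i j)) := by ring
      _ = ((∏ k, d k) / d i) * (B j i * d j) := by rw [← h3]
      _ = -((∏ k, d k) / d i * (-B j i)) * d j := by ring
  exact mul_right_cancel₀ (ne_of_gt (hd j)) key

/-! ### Sign coherence and column signs -/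

lemma epsCol_cases {C : Matrix (Fin n) (Fin n) ℤ} (l : Fin n) :
    epsCol C l = 1 ∨ epsCol C l = -1 := by
  unfold epsCol; split <;> simp

lemma epsCol_nonneg {C : Matrix (Fin n) (Fin n) ℤ} (hsc : SignCoherent C) (l : Fin n) :
    ∀ i, 0 ≤ epsCol C l * C i l := by
  intro i
  unfold epsCol
  split
  · rename_i hneg
    obtain ⟨p, hp⟩ := hneg
    rcases hsc l with hpos | hneg'
    · exact absurd (hpos p) (by omega)
    · have := hneg' i; omega
  · rename_i hnn
    push_neg at hnn
    have := hnn i; omega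

/-- If corresponding entries of columns `l` of `C` and `C'` have positive product,
the column signs agree. -/
lemma epsCol_eq_of_pos_entry {C C' : Matrix (Fin n) (Fin n) ℤ}
    (hC : SignCoherent C) (hC' : SignCoherent C') {l p : Fin n}
    (hpos : 0 < C p l * C' p l) : epsCol C l = epsCol C' l := by
  have key : ∀ (X : Matrix (Fin n) (Fin n) ℤ), SignCoherent X → 0 < X p l →
      epsCol X l = 1 := by
    intro X hX hp
    unfold epsCol
    split
    · rename_i hneg
      obtain ⟨q, hq⟩ := hneg
      rcases hX l with h1 | h1
      · exact absurd (h1 q) (by omega)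
      · exact absurd (h1 p) (by omega)
    · rfl
  have key' : ∀ (X : Matrix (Fin n) (Fin n) ℤ), X p l < 0 → epsCol X l = -1 := by
    intro X hp
    unfold epsCol
    rw [if_pos ⟨p, hp⟩]
  rcases lt_trichotomy (C p l) 0 with hc | hc | hc
  · have hc' : C' p l < 0 := by nlinarith
    rw [key' _ hc, key' _ hc']
  · rw [hc, zero_mul] at hpos; exact absurd hpos (lt_irrefl 0)
  · have hc' : 0 < C' p l := by nlinarith
    rw [key _ hC hc, key _ hC' hc']

/-- A unit integer matrix has no zero row. -/
lemma row_ne_zero_of_isUnit {W : Matrix (Fin n) (Fin n) ℤ} (hW : IsUnit W) (l : Fin n) :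
    ∃ k, W l k ≠ 0 := by
  obtain ⟨u, hu⟩ := hW
  have h1 : W * (↑u⁻¹ : Matrix (Fin n) (Fin n) ℤ) = 1 := by
    rw [← hu]; exact u.mul_inv
  by_contra hz
  push_neg at hz
  have := congrFun (congrFun h1 l) l
  rw [Matrix.mul_apply] at this
  simp only [hz, zero_mul, Finset.sum_const_zero, Matrix.one_apply_eq] at this
  exact one_ne_zero this.symm

end Aux

section Main

open Finset

variable {n : ℕ}

/-- Unfolding `BCG` along an appended letter. -/
lemma BCG_concat (B0 : Matrix (Fin n) (Fin n) ℤ) (w : List (Fin n)) (l : Fin n) :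
    BCG B0 (w ++ [l]) = BCGstep B0 (BCG B0 w) l := by
  unfold BCG
  rw [List.foldl_append]
  rfl

/-- The inductive invariant for the tropical duality proof. -/
def DualInv (B : Matrix (Fin n) (Fin n) ℤ) (d : Fin n → ℤ) (w : List (Fin n)) : Prop :=
  SkewSymmBy (Bmat B w) d ∧
  Bmat (-Bᵀ) w = -(Bmat B w)ᵀ ∧
  B * Cmat B w = Gmat B w * Bmat B w ∧
  (Gmat B w)ᵀ * Cmat (-Bᵀ) w = 1 ∧
  ∃ W : Matrix (Fin n) (Fin n) ℤ, IsUnit W ∧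
    (Cmat B w)ᵀ * Matrix.diagonal d * Cmat (-Bᵀ) w = Matrix.diagonal d * W * Wᵀ

lemma dualInv_step (hGSC : GlobalSC n) (B : Matrix (Fin n) (Fin n) ℤ) (d : Fin n → ℤ)
    (hB : SkewSymmBy B d) (w : List (Fin n)) (l : Fin n) (ih : DualInv B d w) :
    DualInv B d (w ++ [l]) := by
  obtain ⟨hskew, hBT, hBC, hGC, W, hWu, hWe⟩ := ih
  set Bm := Bmat B w with hBm
  set Cm := Cmat B w with hCm
  set Gm := Gmat B w with hGm
  set Cm' := Cmat (-Bᵀ) w with hCm'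
  have hsc : SignCoherent Cm := hGSC B ⟨d, hB⟩ w
  have hsc' : SignCoherent Cm' := hGSC (-Bᵀ) (skewSymmetrizable_negT ⟨d, hB⟩) w
  set ε := epsCol Cm l with hε
  have hεc : ε = 1 ∨ ε = -1 := epsCol_cases l
  have hll : Bm l l = 0 := skew_diag hskew l
  -- sign equality ε_l(Cm) = ε_l(Cm')
  have hεε : epsCol Cm l = epsCol Cm' l := by
    have hdiag := congrFun (congrFun hWe l) l
    rw [Matrix.mul_apply] at hdiag
    have hrhs : (Matrix.diagonal d * W * Wᵀ) l l = d l * ∑ k, W l k * W l k := by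
      rw [Matrix.mul_apply, Finset.mul_sum]
      apply Finset.sum_congr rfl
      intro k _
      rw [Matrix.diagonal_mul, Matrix.transpose_apply]; ring
    have hlhs : ∀ q, ((Cm)ᵀ * Matrix.diagonal d) l q * Cm' q l
        = d q * (Cm q l * Cm' q l) := by
      intro q
      rw [Matrix.mul_diagonal, Matrix.transpose_apply]; ring
    rw [hrhs] at hdiag
    rw [Finset.sum_congr rfl fun q _ => hlhs q] at hdiag
    obtain ⟨k0, hk0⟩ := row_ne_zero_of_isUnit hWu l
    have hsum : 0 < ∑ k, W l k * W l k :=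
      Finset.sum_pos' (fun k _ => mul_self_nonneg _)
        ⟨k0, Finset.mem_univ k0, mul_self_pos.mpr hk0⟩
    have hpos : 0 < ∑ q, d q * (Cm q l * Cm' q l) := by
      rw [hdiag]; exact mul_pos (hB.1 l) hsum
    have hex : ∃ q ∈ Finset.univ (α := Fin n), (0:ℤ) < d q * (Cm q l * Cm' q l) := by
      by_contra hno
      push_neg at hno
      have : ∑ q, d q * (Cm q l * Cm' q l) ≤ 0 :=
        Finset.sum_nonpos fun q hq => hno q hq
      omega
    obtain ⟨q, _, hq⟩ := hex
    have hq' : 0 < Cm q l * Cm' q l := by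
      have := hB.1 q; nlinarith
    exact epsCol_eq_of_pos_entry hsc hsc' hq'
  set E := Emat Bm (-ε) l with hE
  set F := Fmat Bm ε l with hF
  have hBCG : BCG B (w ++ [l]) = BCGstep B (BCG B w) l := BCG_concat B w l
  have hBCG' : BCG (-Bᵀ) (w ++ [l]) = BCGstep (-Bᵀ) (BCG (-Bᵀ) w) l := BCG_concat (-Bᵀ) w l
  have hBnew : Bmat B (w ++ [l]) = mutB Bm l := by rw [Bmat, hBCG]; rfl
  have hCnew : Cmat B (w ++ [l]) = mutC Bm Cm l := by rw [Cmat, hBCG]; rfl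
  have hGnew : Gmat B (w ++ [l])
      = Gm * (Jmat n l + colR (matPos Bm) l) - B * colR (matPos Cm) l := by
    rw [Gmat, hBCG]; rfl
  have hBnew' : Bmat (-Bᵀ) (w ++ [l]) = mutB (Bmat (-Bᵀ) w) l := by rw [Bmat, hBCG']; rfl
  have hCnew' : Cmat (-Bᵀ) (w ++ [l]) = mutC (Bmat (-Bᵀ) w) Cm' l := by
    rw [Cmat, hBCG']; rfl
  -- C step
  have hCstep : Cmat B (w ++ [l]) = Cm * F :=
    hCnew.trans (mutC_eq Bm Cm l ε hεc (epsCol_nonneg hsc l))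
  -- C' step
  have hC'step : Cmat (-Bᵀ) (w ++ [l]) = Cm' * Eᵀ := by
    have hsgn : ∀ i, 0 ≤ ε * Cm' i l := by
      intro i
      rw [hε, hεε]
      exact epsCol_nonneg hsc' l i
    rw [hCnew', hBT, mutC_eq (-Bmᵀ) Cm' l ε hεc hsgn, Fmat_negT, hE]
  -- B step
  have hBstep : Bmat B (w ++ [l]) = E * (Bm * F) := by
    rw [hBnew, hE, hF, mutB_factor Bm l ε hεc hll]
  -- G step
  have hGstep : Gmat B (w ++ [l]) = Gm * E := by
    rw [hGnew, Jmat_add_colR Bm l hll]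
    rcases hεc with h1 | h1
    · have hnn : ∀ i, 0 ≤ Cm i l := by
        intro i; have := epsCol_nonneg hsc l i; rw [← hε, h1] at this; omega
      have hcolR : colR (matPos Cm) l = colR Cm l := by
        ext i j; simp only [colR, matPos]
        split
        · rename_i hjl
          rw [hjl]
          exact max_eq_left (hnn i)
        · rfl
      rw [hcolR, mul_colR, hBC, ← mul_colR, ← mul_sub, hE, h1]
      rw [Emat_one_sub_colR Bm l hll]
    · have hnp : ∀ i, Cm i l ≤ 0 := by
        intro i; have := epsCol_nonneg hsc l i; rw [← hε, h1] at this; omega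
      have hcolR : colR (matPos Cm) l = 0 := by
        ext i j; simp only [colR, matPos, Matrix.zero_apply]
        split
        · rename_i hjl
          rw [hjl]
          exact max_eq_right (hnp i)
        · rfl
      rw [hcolR, Matrix.mul_zero, sub_zero, hE, h1, neg_neg]
  refine ⟨?_, ?_, ?_, ?_, ?_⟩
  · rw [hBnew]; exact skew_mutB hskew l
  · rw [hBnew', hBnew, hBT, mutB_negT]
  · rw [hCstep, hGstep, hBstep, ← mul_assoc (Gm * E) E (Bm * F),
      mul_assoc Gm E E, Emat_invol, mul_one, ← mul_assoc, hBC, mul_assoc]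
  · rw [hGstep, hC'step, Matrix.transpose_mul, mul_assoc, ← mul_assoc (Gm)ᵀ Cm' Eᵀ,
      ← mul_assoc Eᵀ _ _, hGC, mul_one, ← Matrix.transpose_mul, hE, Emat_invol,
      Matrix.transpose_one]
  · refine ⟨E * W, (Emat_isUnit Bm (-ε) l).mul hWu, ?_⟩
    rw [hCstep, hC'step, Matrix.transpose_mul]
    have hFD : Fᵀ * Matrix.diagonal d = Matrix.diagonal d * E := by
      rw [hF, hE]
      exact Fmat_T_diag hskew ε l
    calc Fᵀ * Cmᵀ * Matrix.diagonal d * (Cm' * Eᵀ)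
        = Fᵀ * (Cmᵀ * Matrix.diagonal d * Cm') * Eᵀ := by
          simp only [mul_assoc]
      _ = Fᵀ * (Matrix.diagonal d * W * Wᵀ) * Eᵀ := by rw [hWe]
      _ = (Fᵀ * Matrix.diagonal d) * (W * (Wᵀ * Eᵀ)) := by simp only [mul_assoc]
      _ = Matrix.diagonal d * E * (W * (Wᵀ * Eᵀ)) := by rw [hFD]
      _ = Matrix.diagonal d * (E * W) * (E * W)ᵀ := by
          rw [Matrix.transpose_mul]; simp only [mul_assoc]

lemma dualInv_all (hGSC : GlobalSC n) (B : Matrix (Fin n) (Fin n) ℤ) (d : Fin n → ℤ)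
    (hB : SkewSymmBy B d) (w : List (Fin n)) : DualInv B d w := by
  induction w using List.reverseRecOn with
  | nil =>
    refine ⟨?_, ?_, ?_, ?_, 1, isUnit_one, ?_⟩ <;>
      simp [DualInv, Bmat, Cmat, Gmat, BCG, hB]
  | append_singleton w l ih => exact dualInv_step hGSC B d hB w l ih

end Main

/-- first tropical duality: under the global sign-coherence hypothesis,
for every skew-symmetrizable `B` and word `w`, the matrix `C^{-Bᵀ}(w)` is invertible and
`(G^B(w))ᵀ = (C^{-Bᵀ}(w))⁻¹`, i.e. `(G^B(w))ᵀ · C^{-Bᵀ}(w) = I`. -/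
theorem tropical_duality_G_C {n : ℕ} (hGSC : GlobalSC n) (B : Matrix (Fin n) (Fin n) ℤ)
    (hB : SkewSymmetrizable B) (w : List (Fin n)) :
    IsUnit (Cmat (-Bᵀ) w) ∧ (Gmat B w)ᵀ * Cmat (-Bᵀ) w = 1 := by
  obtain ⟨d, hd⟩ := hB
  have h := (dualInv_all hGSC B d hd w).2.2.2.1
  exact ⟨(Matrix.isUnit_iff_isUnit_det _).2 (Matrix.isUnit_det_of_left_inverse h), h⟩
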